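/- Let C : I → ℝ² be a C² plane curve on an open interval I, let D ⊂ ℝ² be open, and let u, v : D → I be differentiable functions such that C(u(p)) + C(v(p)) = 2p for all p ∈ D and [C'(u(p)), C'(v(p))] ≠ 0 on D. Define f : D → ℝ by f(p) = (1/4)·∫_{u(p)}^{v(p)} [C(s) − p, C'(s)] ds. Then f is differentiable and ∇f(p) = R( (C(v(p)) − C(u(p)))/2 ) for every p ∈ D. -/

import Mathlib

noncomputable section

/-- Determinant of the 2×2 matrix with columns `X`, `Y`. -/
def det2 (X Y : ℝ × ℝ) : ℝ := X.1 * Y.2 - X.2 * Y.1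

/-- Counterclockwise rotation by 90 degrees: `R(x,y) = (−y, x)`. -/
def rot (X : ℝ × ℝ) : ℝ × ℝ := (-X.2, X.1)

/-- Gradient of `f : ℝ² → ℝ`. -/
def grad (f : ℝ × ℝ → ℝ) (p : ℝ × ℝ) : ℝ × ℝ :=
  (fderiv ℝ f p (1, 0), fderiv ℝ f p (0, 1))

/-- The linear map `X ↦ det2 p X`. -/
def detL (p : ℝ × ℝ) : (ℝ × ℝ) →L[ℝ] ℝ :=
  p.1 • ContinuousLinearMap.snd ℝ ℝ ℝ - p.2 • ContinuousLinearMap.fst ℝ ℝ ℝ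

open MeasureTheory Set ContinuousLinearMap in
/-- The area distance `f(p) = (1/4)·∫_{u(p)}^{v(p)} [C(s) − p, C'(s)] ds` is differentiable
with `∇f(p) = R((C(v(p)) − C(u(p)))/2)`. -/
theorem statement2 (a b : ℝ) (C : ℝ → ℝ × ℝ) (hC : ContDiffOn ℝ 2 C (Set.Ioo a b))
    (D : Set (ℝ × ℝ)) (hD : IsOpen D)
    (u v : ℝ × ℝ → ℝ)
    (hu : DifferentiableOn ℝ u D) (hv : DifferentiableOn ℝ v D)
    (humem : ∀ p ∈ D, u p ∈ Set.Ioo a b) (hvmem : ∀ p ∈ D, v p ∈ Set.Ioo a b)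
    (hchord : ∀ p ∈ D, C (u p) + C (v p) = (2 : ℝ) • p)
    (hdet : ∀ p ∈ D, det2 (deriv C (u p)) (deriv C (v p)) ≠ 0)
    (f : ℝ × ℝ → ℝ)
    (hf : ∀ p ∈ D, f p = (4⁻¹ : ℝ) * ∫ s in (u p)..(v p), det2 (C s - p) (deriv C s)) :
    ∀ p ∈ D,
      DifferentiableAt ℝ f p ∧
      grad f p = rot ((2⁻¹ : ℝ) • (C (v p) - C (u p))) := by
  have hIopen : IsOpen (Set.Ioo a b) := isOpen_Ioo
  have hCdiff : DifferentiableOn ℝ C (Set.Ioo a b) := hC.differentiableOn two_ne_zero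
  have hCd : ∀ x ∈ Set.Ioo a b, HasDerivAt C (deriv C x) x := fun x hx =>
    (hCdiff.differentiableAt (hIopen.mem_nhds hx)).hasDerivAt
  have hC'cont : ContinuousOn (deriv C) (Set.Ioo a b) :=
    hC.continuousOn_deriv_of_isOpen hIopen one_le_two
  have hCcont : ContinuousOn C (Set.Ioo a b) := hC.continuousOn
  set g : ℝ → ℝ := fun s => (C s).1 * (deriv C s).2 - (C s).2 * (deriv C s).1 with hgdef
  have hgcont : ContinuousOn g (Set.Ioo a b) :=
    (hCcont.fst.mul hC'cont.snd).sub (hCcont.snd.mul hC'cont.fst)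
  have hsub : ∀ x ∈ Set.Ioo a b, ∀ y ∈ Set.Ioo a b, Set.uIcc x y ⊆ Set.Ioo a b :=
    fun x hx y hy => Set.OrdConnected.uIcc_subset Set.ordConnected_Ioo hx hy
  have hgint : ∀ x ∈ Set.Ioo a b, ∀ y ∈ Set.Ioo a b, IntervalIntegrable g volume x y :=
    fun x hx y hy => (hgcont.mono (hsub x hx y hy)).intervalIntegrable
  intro p₀ hp₀
  have hc : u p₀ ∈ Set.Ioo a b := humem p₀ hp₀
  set c : ℝ := u p₀ with hcdef
  set G : ℝ → ℝ := fun x => ∫ s in c..x, g s with hGdef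
  have hGd : ∀ x ∈ Set.Ioo a b, HasDerivAt G (g x) x := fun x hx =>
    intervalIntegral.integral_hasDerivAt_right (hgint c hc x hx)
      (ContinuousOn.stronglyMeasurableAtFilter hIopen hgcont x hx)
      (hgcont.continuousAt (hIopen.mem_nhds hx))
  set F : ℝ × ℝ → ℝ := fun p =>
    4⁻¹ * (G (v p) - G (u p) -
      ((p.1 * (C (v p)).2 - p.2 * (C (v p)).1) - (p.1 * (C (u p)).2 - p.2 * (C (u p)).1))) with hFdef
  have hfF : f =ᶠ[nhds p₀] F := by
    filter_upwards [hD.mem_nhds hp₀] with p hp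
    have hup := humem p hp
    have hvp := hvmem p hp
    have hdetc : ContinuousOn (fun s => p.1 * (deriv C s).2 - p.2 * (deriv C s).1) (Set.Ioo a b) :=
      (continuousOn_const.mul hC'cont.snd).sub (continuousOn_const.mul hC'cont.fst)
    have hint2 : IntervalIntegrable (fun s => p.1 * (deriv C s).2 - p.2 * (deriv C s).1)
        volume (u p) (v p) := ((hdetc.mono (hsub _ hup _ hvp))).intervalIntegrable
    have h1 : (∫ s in (u p)..(v p), det2 (C s - p) (deriv C s))
        = (∫ s in (u p)..(v p), g s)
          - ∫ s in (u p)..(v p), (p.1 * (deriv C s).2 - p.2 * (deriv C s).1) := by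
      rw [← intervalIntegral.integral_sub (hgint _ hup _ hvp) hint2]
      apply intervalIntegral.integral_congr
      intro s hs
      simp only [det2, hgdef, Prod.fst_sub, Prod.snd_sub]
      ring
    have h2 : (∫ s in (u p)..(v p), g s) = G (v p) - G (u p) :=
      (intervalIntegral.integral_interval_sub_left (hgint c hc _ hvp) (hgint c hc _ hup)).symm
    have h3 : (∫ s in (u p)..(v p), (p.1 * (deriv C s).2 - p.2 * (deriv C s).1))
        = (p.1 * (C (v p)).2 - p.2 * (C (v p)).1) - (p.1 * (C (u p)).2 - p.2 * (C (u p)).1) := by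
      refine intervalIntegral.integral_eq_sub_of_hasDerivAt
          (f := fun t => p.1 * (C t).2 - p.2 * (C t).1) (fun s hs => ?_) hint2
      have hs' : s ∈ Set.Ioo a b := hsub _ hup _ hvp hs
      have hC1 : HasDerivAt (fun t => (C t).1) (deriv C s).1 s :=
        ((hasFDerivAt_fst (𝕜 := ℝ) (p := C s)).comp_hasDerivAt s (hCd s hs'))
      have hC2 : HasDerivAt (fun t => (C t).2) (deriv C s).2 s :=
        ((hasFDerivAt_snd (𝕜 := ℝ) (p := C s)).comp_hasDerivAt s (hCd s hs'))
      exact ((hC2.const_mul p.1).sub (hC1.const_mul p.2))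
    rw [hf p hp, h1, h2, h3]
  -- derivatives of u and v
  have hu' : HasFDerivAt u (fderiv ℝ u p₀) p₀ :=
    (hu.differentiableAt (hD.mem_nhds hp₀)).hasFDerivAt
  have hv' : HasFDerivAt v (fderiv ℝ v p₀) p₀ :=
    (hv.differentiableAt (hD.mem_nhds hp₀)).hasFDerivAt
  have hup₀ : u p₀ ∈ Set.Ioo a b := humem p₀ hp₀
  have hvp₀ : v p₀ ∈ Set.Ioo a b := hvmem p₀ hp₀
  -- derivative of C ∘ u, C ∘ v
  have hCu : HasFDerivAt (fun p => C (u p))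
      ((ContinuousLinearMap.smulRight (1 : ℝ →L[ℝ] ℝ) (deriv C (u p₀))).comp (fderiv ℝ u p₀)) p₀ := by
    have := ((hCd _ hup₀).hasFDerivAt).comp p₀ hu'
    rwa [Function.comp_def] at this
  have hCv : HasFDerivAt (fun p => C (v p))
      ((ContinuousLinearMap.smulRight (1 : ℝ →L[ℝ] ℝ) (deriv C (v p₀))).comp (fderiv ℝ v p₀)) p₀ := by
    have := ((hCd _ hvp₀).hasFDerivAt).comp p₀ hv'
    rwa [Function.comp_def] at this
  -- chord relation derivative
  have hderEq :
      ((ContinuousLinearMap.smulRight (1 : ℝ →L[ℝ] ℝ) (deriv C (u p₀))).comp (fderiv ℝ u p₀))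
        + ((ContinuousLinearMap.smulRight (1 : ℝ →L[ℝ] ℝ) (deriv C (v p₀))).comp (fderiv ℝ v p₀))
      = (2 : ℝ) • ContinuousLinearMap.id ℝ (ℝ × ℝ) := by
    have h1 : HasFDerivAt (fun p => C (u p) + C (v p)) _ p₀ := hCu.add hCv
    have h2 : HasFDerivAt (fun p => C (u p) + C (v p))
        ((2 : ℝ) • ContinuousLinearMap.id ℝ (ℝ × ℝ)) p₀ := by
      have h3 : HasFDerivAt (fun p : ℝ × ℝ => (2 : ℝ) • p)
          ((2 : ℝ) • ContinuousLinearMap.id ℝ (ℝ × ℝ)) p₀ := (hasFDerivAt_id p₀).const_smul (2 : ℝ)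
      apply h3.congr_of_eventuallyEq
      filter_upwards [hD.mem_nhds hp₀] with p hp using hchord p hp
    exact h1.unique h2
  -- derivatives of scalar pieces of F
  have hGv : HasFDerivAt (fun p => G (v p))
      ((ContinuousLinearMap.smulRight (1 : ℝ →L[ℝ] ℝ) (g (v p₀))).comp (fderiv ℝ v p₀)) p₀ := by
    have := ((hGd _ hvp₀).hasFDerivAt).comp p₀ hv'
    rwa [Function.comp_def] at this
  have hGu : HasFDerivAt (fun p => G (u p))
      ((ContinuousLinearMap.smulRight (1 : ℝ →L[ℝ] ℝ) (g (u p₀))).comp (fderiv ℝ u p₀)) p₀ := by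
    have := ((hGd _ hup₀).hasFDerivAt).comp p₀ hu'
    rwa [Function.comp_def] at this
  have hp1 : HasFDerivAt (fun p : ℝ × ℝ => p.1) (ContinuousLinearMap.fst ℝ ℝ ℝ) p₀ := hasFDerivAt_fst
  have hp2 : HasFDerivAt (fun p : ℝ × ℝ => p.2) (ContinuousLinearMap.snd ℝ ℝ ℝ) p₀ := hasFDerivAt_snd
  have hCv1 := hCv.fst
  have hCv2 := hCv.snd
  have hCu1 := hCu.fst
  have hCu2 := hCu.snd
  have hFd := (((hGv.sub hGu).sub
      (((hp1.mul hCv2).sub (hp2.mul hCv1)).sub ((hp1.mul hCu2).sub (hp2.mul hCu1)))).const_mul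
      (4⁻¹ : ℝ))
  have hfd : HasFDerivAt f (detL ((2⁻¹ : ℝ) • (C (v p₀) - C (u p₀)))) p₀ := by
    refine (hFd.congr_of_eventuallyEq hfF).congr_fderiv ?_
    refine ContinuousLinearMap.ext fun h => ?_
    have e12 := hchord p₀ hp₀
    rw [Prod.ext_iff] at e12
    obtain ⟨e1, e2⟩ := e12
    have e34 := ContinuousLinearMap.ext_iff.mp hderEq h
    rw [Prod.ext_iff] at e34
    obtain ⟨e3, e4⟩ := e34
    simp only [ContinuousLinearMap.add_apply, ContinuousLinearMap.sub_apply,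
      ContinuousLinearMap.smul_apply, ContinuousLinearMap.comp_apply,
      ContinuousLinearMap.smulRight_apply, ContinuousLinearMap.one_apply,
      ContinuousLinearMap.coe_fst', ContinuousLinearMap.coe_snd',
      ContinuousLinearMap.coe_id', id_eq, detL, Prod.smul_fst, Prod.smul_snd,
      Prod.fst_sub, Prod.snd_sub, smul_eq_mul, Prod.smul_def] at e3 e4 ⊢
    simp only [Prod.fst_add, Prod.snd_add, Prod.smul_fst, Prod.smul_snd, smul_eq_mul]
      at e1 e2 e3 e4
    simp only [hgdef]
    linear_combination
      (((fderiv ℝ v p₀) h * (deriv C (v p₀)).2 - (fderiv ℝ u p₀) h * (deriv C (u p₀)).2) / 8) * e1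
      - (((fderiv ℝ v p₀) h * (deriv C (v p₀)).1 - (fderiv ℝ u p₀) h * (deriv C (u p₀)).1) / 8) * e2
      - (((C (v p₀)).2 - (C (u p₀)).2) / 8) * e3
      + (((C (v p₀)).1 - (C (u p₀)).1) / 8) * e4
  refine ⟨hfd.differentiableAt, ?_⟩
  rw [grad, hfd.fderiv]
  simp [detL, rot, Prod.ext_iff, hcdef]
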